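/- Let c_φ > 0 and 0 ≤ c_β < 1 be constants, and for each integer t ≥ 0 set φ_t = c_φ/√(t+1) and β_t = c_β/√(t+1). Let (a_t)_{t≥0} be a sequence of nonnegative real numbers with a_0 = 0 satisfying, for all t ≥ 0, a_{t+1} ≤ β_t · a_t + (1 − β_t) · φ_t. Then for all t ≥ 0: a_{t+1} ≤ 2 c_φ/√(t+1), and moreover a_t ≤ c_φ for all t ≥ 0. -/

import Mathlib

/-- The deterministic scalar recursion governing the local gradient estimator magnitudes:
if `a 0 = 0`, `a` is nonnegative, and `a (t+1) ≤ β t * a t + (1 − β t) * φ t` with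
`φ t = c_φ/√(t+1)` and `β t = c_β/√(t+1)`, `c_φ > 0`, `0 ≤ c_β < 1`, then
`a (t+1) ≤ 2 c_φ/√(t+1)` and `a t ≤ c_φ` for all `t`. -/
theorem gradient_estimator_bound
    (cphi cbeta : ℝ) (hcphi : 0 < cphi) (hcbeta0 : 0 ≤ cbeta) (hcbeta1 : cbeta < 1)
    (φ β : ℕ → ℝ)
    (hφ : ∀ t : ℕ, φ t = cphi / Real.sqrt ((t : ℝ) + 1))
    (hβ : ∀ t : ℕ, β t = cbeta / Real.sqrt ((t : ℝ) + 1))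
    (a : ℕ → ℝ) (ha0 : a 0 = 0) (hanneg : ∀ t : ℕ, 0 ≤ a t)
    (hrec : ∀ t : ℕ, a (t + 1) ≤ β t * a t + (1 - β t) * φ t) :
    (∀ t : ℕ, a (t + 1) ≤ 2 * cphi / Real.sqrt ((t : ℝ) + 1)) ∧
      (∀ t : ℕ, a t ≤ cphi) := by
  have key : ∀ t : ℕ, (1:ℝ) ≤ Real.sqrt ((t : ℝ) + 1) := by
    intro t
    have h := Real.sqrt_le_sqrt (show (1:ℝ) ≤ (t:ℝ)+1 by
      have : (0:ℝ) ≤ (t:ℝ) := t.cast_nonneg; linarith)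
    simpa using h
  have hbound : ∀ t : ℕ, a t ≤ cphi := by
    intro t
    induction t with
    | zero => rw [ha0]; exact hcphi.le
    | succ t ih =>
      have hs := key t
      have hs0 : (0:ℝ) < Real.sqrt ((t : ℝ) + 1) := by linarith
      have hβ0 : 0 ≤ β t := by rw [hβ]; positivity
      have hβ1 : β t ≤ 1 := by
        rw [hβ, div_le_one hs0]; linarith
      have hφlt : φ t ≤ cphi := by
        rw [hφ, div_le_iff₀ hs0]; nlinarith
      have h1 := hrec t
      nlinarith [mul_le_mul_of_nonneg_left ih hβ0,
        mul_le_mul_of_nonneg_left hφlt (by linarith : (0:ℝ) ≤ 1 - β t)]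
  refine ⟨fun t => ?_, hbound⟩
  have hs := key t
  have hs0 : (0:ℝ) < Real.sqrt ((t : ℝ) + 1) := by linarith
  have hβ0 : 0 ≤ β t := by rw [hβ]; positivity
  have hβ1 : β t ≤ 1 := by
    rw [hβ, div_le_one hs0]; linarith
  have h1 := hrec t
  have h2 : β t * a t ≤ β t * cphi := mul_le_mul_of_nonneg_left (hbound t) hβ0
  have h3 : (1 - β t) * φ t ≤ φ t := by
    rw [hφ]
    have : 0 ≤ cphi / Real.sqrt ((t : ℝ) + 1) := by positivity
    nlinarith
  have h4 : β t * cphi + φ t ≤ 2 * cphi / Real.sqrt ((t : ℝ) + 1) := by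
    rw [hβ, hφ, div_mul_eq_mul_div, ← add_div, div_le_div_iff₀ hs0 hs0]
    nlinarith [mul_nonneg (mul_nonneg (by linarith : (0:ℝ) ≤ 1 - cbeta) hcphi.le) hs0.le]
  linarith
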